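/- Sequential rejection principle: Let V be a finite set of size n, let (p_v)_{v∈V} be random variables, and let π : V × 𝒫(V) → ℝ be a weight function. Define Ŝ₀ = ∅ and Ŝ_{i} = Ŝ_{i−1} ∪ {v : p_v ≤ π(v, Ŝ_{i−1})}, with final output Ŝ = Ŝ_n. Suppose S ⊆ V is such that (i) single-step condition: on some event E, p_v > π(v, S) for all v ∉ S; (ii) monotonicity: for every i and every outcome, if Ŝ_i ⊆ S then π(v, Ŝ_i) ≤ π(v, S) for all v ∉ S. Then on the event E, Ŝ ⊆ S. In particular, if P(E) ≥ 1 − α then P(Ŝ ⊆ S) ≥ 1 − α. -/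
import Mathlib


open MeasureTheory
open scoped ENNReal

/-- The sequential rejection principle: starting from the empty rejection set and
iteratively rejecting every hypothesis whose `p`-value falls below the current weight,
if the single-step condition holds on an event `E` and the weight function is monotone,
then on `E` the final rejection set after `n = |V|` steps is contained in `S`; in
particular, if `P(E) ≥ 1 - α` then `P(Ŝ ⊆ S) ≥ 1 - α`. -/
theorem stmt10
    {Ω : Type*} [MeasurableSpace Ω] (μ : Measure Ω) [IsProbabilityMeasure μ]
    {V : Type*} [Fintype V] [DecidableEq V]
    (p : V → Ω → ℝ) (π : V → Finset V → ℝ)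
    (Shat : ℕ → Ω → Finset V)
    (h0 : ∀ ω, Shat 0 ω = ∅)
    (hstep : ∀ i ω, Shat (i + 1) ω =
      Shat i ω ∪ Finset.univ.filter (fun v => p v ω ≤ π v (Shat i ω)))
    (S : Finset V) (E : Set Ω) (hE : MeasurableSet E)
    (hsingle : ∀ ω ∈ E, ∀ v ∉ S, π v S < p v ω)
    (hmono : ∀ i ω, Shat i ω ⊆ S → ∀ v ∉ S, π v (Shat i ω) ≤ π v S)
    (α : ℝ) :
    (∀ ω ∈ E, Shat (Fintype.card V) ω ⊆ S) ∧
      (1 - ENNReal.ofReal α ≤ μ E →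
        1 - ENNReal.ofReal α ≤ μ {ω | Shat (Fintype.card V) ω ⊆ S}) := by
  have key : ∀ ω ∈ E, ∀ i, Shat i ω ⊆ S := by
    intro ω hω i
    induction i with
    | zero => simp [h0 ω]
    | succ i ih =>
      rw [hstep i ω]
      intro v hv
      rcases Finset.mem_union.mp hv with h | h
      · exact ih h
      · simp only [Finset.mem_filter, Finset.mem_univ, true_and] at h
        by_contra hvS
        exact absurd (le_trans h (hmono i ω ih v hvS))
          (not_le.mpr (hsingle ω hω v hvS))
  refine ⟨fun ω hω => key ω hω _, fun hα => le_trans hα (measure_mono ?_)⟩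
  exact fun ω hω => key ω hω _
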